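/- arXiv:2404.10750 — 2 statements merged into one kernel-verified Lean document; each statement's English description precedes it below -/
import Mathlib

section
/- Let k, r, n be positive integers with r ≤ ⌈k/2⌉ and k ≤ n, and let D be a digraph of order n with a(D) > (k−1)·n. Then D has a subdigraph D' such that: (1) a(D') > (k−1)·(|(D')⁺| + |(D')⁻|)/2; (2) deg⁺_{D'}(a) + deg⁻_{D'}(b) ≥ k for every a ∈ (D')⁺ and b ∈ (D')⁻; and at least one of the following holds: (3-I) every vertex of D' has out-degree 0 or at least k/2 in D' and in-degree 0 or at least r in D', there is a vertex a of D' with deg⁺_{D'}(a) ≥ k, and |(D')⁺| ≤ |(D')⁻|; or (3-II) every vertex of D' has out-degree 0 or at least k/2 in D' and in-degree 0 or at least k/2 in D', there is a vertex b of D' with deg⁻_{D'}(b) ≥ k, and every a ∈ (D')⁺ satisfies deg⁺_D(a) > k − r. -/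
open Finset

section Defs

variable {V W : Type*}

/-- Number of arcs of a digraph given by a Boolean adjacency relation. -/
def arcCount [Fintype V] (A : V → V → Bool) : ℕ :=
  ((univ : Finset (V × V)).filter (fun p => A p.1 p.2)).card

/-- Out-neighbourhood. -/
def outNbr [Fintype V] (A : V → V → Bool) (a : V) : Finset V :=
  univ.filter (fun v => A a v)

/-- In-neighbourhood. -/
def inNbr [Fintype V] (A : V → V → Bool) (a : V) : Finset V :=
  univ.filter (fun v => A v a)

/-- Neighbourhood with a sign: `true` = out, `false` = in. -/
def nbr [Fintype V] (A : V → V → Bool) (sign : Bool) (a : V) : Finset V :=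
  if sign then outNbr A a else inNbr A a

/-- Total degree (out-degree plus in-degree). -/
def totalDeg [Fintype V] (A : V → V → Bool) (a : V) : ℕ :=
  (outNbr A a).card + (inNbr A a).card

/-- Maximum total degree `Δ`. -/
def maxDeg [Fintype V] (A : V → V → Bool) : ℕ :=
  univ.sup (totalDeg A)

/-- Second largest element `Δ₂` of the multiset of total degrees. -/
def secondMaxDeg [Fintype V] (A : V → V → Bool) : ℕ :=
  (((univ : Finset V).val.map (totalDeg A)).erase (maxDeg A)).sup

/-- Loopless digraph. -/
def Loopless (A : V → V → Bool) : Prop := ∀ v, ¬ A v v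

/-- Antidirected digraph: no directed path with two arcs. -/
def Antidirected (A : V → V → Bool) : Prop := ∀ x y z, A x y → A y z → False

/-- The underlying (undirected) simple graph of a digraph. -/
def underG (A : V → V → Bool) : SimpleGraph V :=
  SimpleGraph.fromRel (fun x y => A x y)

/-- `𝒦_{2,s}`-freeness: no two distinct vertices `a`, `b` together with signs and `s`
distinct vertices (all different from `a` and `b`) lying in both signed neighbourhoods. -/
def K2sFree [Fintype V] [DecidableEq V] (A : V → V → Bool) (s : ℕ) : Prop :=
  ¬ ∃ (a b : V) (sa sb : Bool) (S : Finset V), a ≠ b ∧ S.card = s ∧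
      a ∉ S ∧ b ∉ S ∧ S ⊆ nbr A sa a ∩ nbr A sb b

/-- `T` embeds in `A`: there is an injective arc-preserving map. -/
def Embeds (T : W → W → Bool) (A : V → V → Bool) : Prop :=
  ∃ f : W → V, Function.Injective f ∧ ∀ x y, T x y → A (f x) (f y)

/-- Vertices of positive out-degree. -/
def outVerts [Fintype V] (A : V → V → Bool) : Finset V :=
  univ.filter (fun v => (outNbr A v).card ≠ 0)

/-- Vertices of positive in-degree. -/
def inVerts [Fintype V] (A : V → V → Bool) : Finset V :=
  univ.filter (fun v => (inNbr A v).card ≠ 0)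

/-- A caterpillar: a tree with a path such that every vertex is on the path
or adjacent to it. -/
def IsCaterpillarG {X : Type*} (G : SimpleGraph X) : Prop :=
  G.IsTree ∧ ∃ (x y : X) (P : G.Walk x y), P.IsPath ∧
    ∀ v, v ∈ P.support ∨ ∃ w ∈ P.support, G.Adj v w

/-- Minimum pseudo-semidegree at least `m`: at least one arc, and every
out-degree and in-degree is `0` or at least `m`. -/
def MinPseudoSemidegGe [Fintype V] (A : V → V → Bool) (m : ℕ) : Prop :=
  0 < arcCount A ∧ (∀ v, (outNbr A v).card = 0 ∨ m ≤ (outNbr A v).card) ∧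
    (∀ v, (inNbr A v).card = 0 ∨ m ≤ (inNbr A v).card)

/-- `D'` is a subdigraph of `D` with vertex set `S`. -/
def SubdigraphOn (D : V → V → Bool) (S : Finset V) (D' : V → V → Bool) : Prop :=
  ∀ x y, D' x y → D x y ∧ x ∈ S ∧ y ∈ S

/-- The vertex set of the double broom `B_{uv}(T)`: the path joining `u` and `v`
together with all neighbours of `u` and all neighbours of `v`. -/
def broomSet [Fintype W] [DecidableEq W] (T : W → W → Bool) {u v : W}
    (p : (underG T).Walk u v) : Finset W :=
  p.support.toFinset ∪ (outNbr T u ∪ inNbr T u) ∪ (outNbr T v ∪ inNbr T v)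

/-- `z` lies strictly after `x` and strictly before `y` in clockwise (cyclic) order
on `Fin n`. -/
def cycBetween {n : ℕ} (x y z : Fin n) : Prop :=
  if x < y then x < z ∧ z < y else x < z ∨ z < y

/-- An arc `pq` of the convex digraph `A` on `Fin n` is good for the antidirected
caterpillar `T` with final vertex `u`, its spine neighbour `v`, and spine with
`plen` edges (so `plen + 1` spine vertices). -/
def GoodArc {n : ℕ} (A : Fin n → Fin n → Bool) (T : W → W → Bool)
    (u v : W) (plen : ℕ) (pq : Fin n × Fin n) : Prop :=
  ∃ f : W → Fin n, Function.Injective f ∧ (∀ x y, T x y → A (f x) (f y)) ∧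
    ((T v u = true ∧ (f v, f u) = pq) ∨ (T u v = true ∧ (f u, f v) = pq)) ∧
    (∀ z : Fin n,
      (plen % 2 = 0 → cycBetween (f u) (f v) z → z ∉ Set.range f) ∧
      (plen % 2 = 1 → z ≠ f u → z ≠ f v → ¬ cycBetween (f u) (f v) z →
        z ∉ Set.range f))

/-- Number of edges of a bipartite graph with parts `α`, `β`. -/
def bipArcCount {α β : Type*} [Fintype α] [Fintype β] (E : α → β → Bool) : ℕ :=
  ((univ : Finset (α × β)).filter (fun p => E p.1 p.2)).card

/-- Degree of a vertex of the `α` part. -/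
def bipDegA {α β : Type*} [Fintype β] (E : α → β → Bool) (a : α) : ℕ :=
  (univ.filter (fun b => E a b)).card

/-- Degree of a vertex of the `β` part. -/
def bipDegB {α β : Type*} [Fintype α] (E : α → β → Bool) (b : β) : ℕ :=
  (univ.filter (fun a => E a b)).card

end Defs

set_option linter.unusedSectionVars false

section Aux
variable {V : Type*} [Fintype V] [DecidableEq V]

lemma arcCount_eq_sum_outNbr (A : V → V → Bool) :
    arcCount A = ∑ v, (outNbr A v).card := by
  classical
  unfold arcCount outNbr
  rw [Finset.card_filter, Fintype.sum_prod_type]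
  exact Finset.sum_congr rfl fun x _ => (Finset.card_filter _ _).symm

lemma arcCount_eq_sum_inNbr (A : V → V → Bool) :
    arcCount A = ∑ v, (inNbr A v).card := by
  classical
  unfold arcCount inNbr
  rw [Finset.card_filter, Fintype.sum_prod_type, Finset.sum_comm]
  exact Finset.sum_congr rfl fun x _ => (Finset.card_filter _ _).symm

/-- transpose -/
def trD {V : Type*} (A : V → V → Bool) : V → V → Bool := fun u v => A v u

lemma outNbr_trD (A : V → V → Bool) (v : V) : outNbr (trD A) v = inNbr A v := rfl
lemma inNbr_trD (A : V → V → Bool) (v : V) : inNbr (trD A) v = outNbr A v := rfl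
lemma outVerts_trD (A : V → V → Bool) : outVerts (trD A) = inVerts A := rfl
lemma inVerts_trD (A : V → V → Bool) : inVerts (trD A) = outVerts A := rfl

lemma arcCount_trD (A : V → V → Bool) : arcCount (trD A) = arcCount A := by
  rw [arcCount_eq_sum_outNbr, arcCount_eq_sum_inNbr]
  rfl

lemma outNbr_mono {A B : V → V → Bool} (h : ∀ u v, A u v → B u v) (v : V) :
    outNbr A v ⊆ outNbr B v := by
  intro w hw
  simp only [outNbr, mem_filter, mem_univ, true_and] at *
  exact h _ _ hw

lemma inNbr_mono {A B : V → V → Bool} (h : ∀ u v, A u v → B u v) (v : V) :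
    inNbr A v ⊆ inNbr B v := by
  intro w hw
  simp only [inNbr, mem_filter, mem_univ, true_and] at *
  exact h _ _ hw

lemma outVerts_mono {A B : V → V → Bool} (h : ∀ u v, A u v → B u v) :
    outVerts A ⊆ outVerts B := by
  intro v hv
  simp only [outVerts, mem_filter, mem_univ, true_and] at *
  obtain ⟨w, hw⟩ := Finset.card_ne_zero.mp hv
  exact Finset.card_ne_zero.mpr ⟨w, outNbr_mono h v hw⟩

lemma arcCount_mono {A B : V → V → Bool} (h : ∀ u v, A u v → B u v) :
    arcCount A ≤ arcCount B := by
  apply Finset.card_le_card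
  intro p hp
  simp only [mem_filter, mem_univ, true_and] at *
  exact h _ _ hp



lemma inVerts_mono {A B : V → V → Bool} (h : ∀ u v, A u v → B u v) :
    inVerts A ⊆ inVerts B := by
  have := outVerts_mono (A := trD A) (B := trD B) (fun u v hv => h v u hv)
  rwa [outVerts_trD, outVerts_trD] at this

lemma arcCount_eq_sum_outVerts (A : V → V → Bool) :
    arcCount A = ∑ v ∈ outVerts A, (outNbr A v).card := by
  rw [arcCount_eq_sum_outNbr]
  symm
  apply Finset.sum_subset (Finset.subset_univ _)
  intro v _ hv
  simpa [outVerts] using hv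

lemma arcCount_eq_sum_inVerts (A : V → V → Bool) :
    arcCount A = ∑ v ∈ inVerts A, (inNbr A v).card := by
  have := arcCount_eq_sum_outVerts (trD A)
  rwa [arcCount_trD, outVerts_trD] at this

lemma exists_out_ge (A : V → V → Bool) (m : ℕ)
    (h : m * (outVerts A).card < arcCount A) : ∃ v, m + 1 ≤ (outNbr A v).card := by
  by_contra hcon
  push_neg at hcon
  have : arcCount A ≤ (outVerts A).card * m := by
    rw [arcCount_eq_sum_outVerts]
    have := Finset.sum_le_card_nsmul (outVerts A) (fun v => (outNbr A v).card) m
      (fun v _ => by simpa using Nat.lt_succ_iff.mp (hcon v))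
    simpa using this
  rw [mul_comm] at h
  linarith

lemma exists_in_ge (A : V → V → Bool) (m : ℕ)
    (h : m * (inVerts A).card < arcCount A) : ∃ v, m + 1 ≤ (inNbr A v).card := by
  have := exists_out_ge (trD A) m (by rwa [arcCount_trD, outVerts_trD])
  exact this


def delOut {V : Type*} [DecidableEq V] (A : V → V → Bool) (x : V) : V → V → Bool :=
  fun u v => A u v && !decide (u = x)

def delIn {V : Type*} [DecidableEq V] (A : V → V → Bool) (y : V) : V → V → Bool :=
  fun u v => A u v && !decide (v = y)

def delBoth {V : Type*} [DecidableEq V] (A : V → V → Bool) (x y : V) : V → V → Bool :=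
  delIn (delOut A x) y

lemma delOut_le (A : V → V → Bool) (x : V) : ∀ u v, delOut A x u v → A u v := by
  intro u v h
  simp only [delOut, Bool.and_eq_true] at h
  exact h.1

lemma delIn_le (A : V → V → Bool) (y : V) : ∀ u v, delIn A y u v → A u v := by
  intro u v h
  simp only [delIn, Bool.and_eq_true] at h
  exact h.1

lemma delBoth_le (A : V → V → Bool) (x y : V) : ∀ u v, delBoth A x y u v → A u v :=
  fun u v h => delOut_le A x u v (delIn_le _ y u v h)

lemma delIn_eq_trD (A : V → V → Bool) (y : V) : delIn A y = trD (delOut (trD A) y) := rfl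

lemma outNbr_delOut (A : V → V → Bool) (x v : V) :
    outNbr (delOut A x) v = if v = x then ∅ else outNbr A v := by
  by_cases hv : v = x <;> ext w <;> simp [outNbr, delOut, hv]

lemma outVerts_delOut (A : V → V → Bool) (x : V) :
    outVerts (delOut A x) = (outVerts A).erase x := by
  ext v
  by_cases hv : v = x <;>
    simp [outVerts, outNbr_delOut, hv, Finset.mem_erase]

lemma inVerts_delOut_subset (A : V → V → Bool) (x : V) :
    inVerts (delOut A x) ⊆ inVerts A :=
  inVerts_mono (delOut_le A x)

lemma arcCount_delOut (A : V → V → Bool) (x : V) :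
    arcCount (delOut A x) + (outNbr A x).card = arcCount A := by
  rw [arcCount_eq_sum_outNbr, arcCount_eq_sum_outNbr]
  have h1 : ∀ v, (outNbr (delOut A x) v).card
      = if v = x then 0 else (outNbr A v).card := by
    intro v
    rw [outNbr_delOut]
    split <;> simp
  simp_rw [h1]
  rw [← Finset.sum_erase_add (univ : Finset V) _ (Finset.mem_univ x),
      ← Finset.sum_erase_add (univ : Finset V) (fun v => (outNbr A v).card) (Finset.mem_univ x)]
  simp only [if_pos rfl]
  have h2 : ∀ v ∈ (univ : Finset V).erase x,
      (if v = x then 0 else (outNbr A v).card) = (outNbr A v).card := by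
    intro v hv
    rw [if_neg (Finset.mem_erase.mp hv).1]
  rw [Finset.sum_congr rfl h2]
  simp

lemma inNbr_delIn (A : V → V → Bool) (y v : V) :
    inNbr (delIn A y) v = if v = y then ∅ else inNbr A v := by
  rw [delIn_eq_trD, inNbr_trD, outNbr_delOut, outNbr_trD]

lemma inVerts_delIn (A : V → V → Bool) (y : V) :
    inVerts (delIn A y) = (inVerts A).erase y := by
  rw [delIn_eq_trD, inVerts_trD, outVerts_delOut, outVerts_trD]

lemma outVerts_delIn_subset (A : V → V → Bool) (y : V) :
    outVerts (delIn A y) ⊆ outVerts A :=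
  outVerts_mono (delIn_le A y)

lemma arcCount_delIn (A : V → V → Bool) (y : V) :
    arcCount (delIn A y) + (inNbr A y).card = arcCount A := by
  have := arcCount_delOut (trD A) y
  rw [delIn_eq_trD, arcCount_trD]
  rw [outNbr_trD] at this
  rw [this, arcCount_trD]

lemma arcCount_delBoth_le (A : V → V → Bool) (x y : V) :
    arcCount (delBoth A x y) + (outNbr A x).card ≤ arcCount A := by
  have h1 := arcCount_delIn (delOut A x) y
  have h2 := arcCount_delOut A x
  have h3 := arcCount_mono (delIn_le (delOut A x) y)
  have hdb : arcCount (delBoth A x y) = arcCount (delIn (delOut A x) y) := rfl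
  omega

lemma arcCount_delBoth_ge (A : V → V → Bool) (x y : V) :
    arcCount A ≤ arcCount (delBoth A x y) + ((outNbr A x).card + (inNbr A y).card) := by
  have h1 := arcCount_delIn (delOut A x) y
  have h2 := arcCount_delOut A x
  have h3 : (inNbr (delOut A x) y).card ≤ (inNbr A y).card :=
    Finset.card_le_card (inNbr_mono (delOut_le A x) y)
  have hdb : arcCount (delBoth A x y) = arcCount (delIn (delOut A x) y) := rfl
  omega

lemma outVerts_delBoth_subset (A : V → V → Bool) (x y : V) :
    outVerts (delBoth A x y) ⊆ (outVerts A).erase x := by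
  have h1 := outVerts_delIn_subset (delOut A x) y
  rw [outVerts_delOut] at h1
  exact h1

lemma inVerts_delBoth_subset (A : V → V → Bool) (x y : V) :
    inVerts (delBoth A x y) ⊆ (inVerts A).erase y := by
  rw [show delBoth A x y = delIn (delOut A x) y from rfl, inVerts_delIn]
  exact Finset.erase_subset_erase y (inVerts_delOut_subset A x)

end Aux

section Arith

lemma auxP_del (K a a' d s s' : ℕ) (hP : K * s < 2 * a) (ha : a' + d = a)
    (hd : 2 * d ≤ K) (hs : s' + 1 ≤ s) : K * s' < 2 * a' := by
  have h1 : K * (s' + 1) ≤ K * s := Nat.mul_le_mul le_rfl hs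
  have h2 : K * (s' + 1) = K * s' + K := by ring
  linarith

lemma auxI_del (Cc Rr a a' d sP sP' sI sI' : ℕ) (hI : Cc * sP + Rr * sI < a)
    (ha : a' + d = a) (hd : d ≤ Cc) (hsP : sP' + 1 ≤ sP) (hsI : sI' ≤ sI) :
    Cc * sP' + Rr * sI' < a' := by
  have h1 : Cc * (sP' + 1) ≤ Cc * sP := Nat.mul_le_mul le_rfl hsP
  have h2 : Rr * sI' ≤ Rr * sI := Nat.mul_le_mul le_rfl hsI
  have h3 : Cc * (sP' + 1) = Cc * sP' + Cc := by ring
  linarith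

lemma auxI_del' (Cc Rr a a' d sP sP' sI sI' : ℕ) (hI : Cc * sP + Rr * sI < a)
    (ha : a' + d = a) (hd : d ≤ Rr) (hsP : sP' ≤ sP) (hsI : sI' + 1 ≤ sI) :
    Cc * sP' + Rr * sI' < a' := by
  have h1 : Rr * (sI' + 1) ≤ Rr * sI := Nat.mul_le_mul le_rfl hsI
  have h2 : Cc * sP' ≤ Cc * sP := Nat.mul_le_mul le_rfl hsP
  have h3 : Rr * (sI' + 1) = Rr * sI' + Rr := by ring
  linarith

lemma auxIP (Cc Rr sP sI a : ℕ) (hI : Cc * sP + Rr * sI < a) (hs : sI ≤ sP)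
    (hRC : Rr ≤ Cc) : (Cc + Rr) * (sP + sI) < 2 * a := by
  have h := mul_add_mul_le_mul_add_mul hRC hs
  nlinarith

lemma auxP_pair (K a a' L sP sP' sI sI' : ℕ) (hP : K * (sP + sI) < 2 * a)
    (ha : a ≤ a' + L) (hL : L ≤ K) (h1 : sP' + 1 ≤ sP) (h2 : sI' + 1 ≤ sI) :
    K * (sP' + sI') < 2 * a' := by
  have h3 : K * (sP' + sI' + 2) ≤ K * (sP + sI) := Nat.mul_le_mul le_rfl (by omega)
  have h4 : K * (sP' + sI' + 2) = K * (sP' + sI') + 2 * K := by ring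
  linarith

lemma auxI_pair (Cc Rr a a' L sP sP' sI sI' : ℕ) (hI : Cc * sP + Rr * sI < a)
    (ha : a ≤ a' + L) (hL : L ≤ Cc + Rr) (h1 : sP' + 1 ≤ sP) (h2 : sI' + 1 ≤ sI) :
    Cc * sP' + Rr * sI' < a' := by
  have h3 : Cc * (sP' + 1) ≤ Cc * sP := Nat.mul_le_mul le_rfl h1
  have h4 : Rr * (sI' + 1) ≤ Rr * sI := Nat.mul_le_mul le_rfl h2
  have h5 : Cc * (sP' + 1) = Cc * sP' + Cc := by ring
  have h6 : Rr * (sI' + 1) = Rr * sI' + Rr := by ring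
  linarith

end Arith

/-- The subdigraph selection lemma (Lemma `cor:subdigraph` of the paper). -/
theorem stmt_11 (k r n : ℕ) (hk : 0 < k) (hr : 0 < r) (hn : 0 < n)
    (hrk : r ≤ (k + 1) / 2) (hkn : k ≤ n)
    {V : Type*} [Fintype V] [DecidableEq V]
    (D : V → V → Bool) (hloop : Loopless D) (hcard : Fintype.card V = n)
    (harcs : (k - 1) * n < arcCount D) :
    ∃ D' : V → V → Bool, (∀ x y, D' x y → D x y) ∧
      (k - 1) * ((outVerts D').card + (inVerts D').card) < 2 * arcCount D' ∧
      (∀ a ∈ outVerts D', ∀ b ∈ inVerts D',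
        k ≤ (outNbr D' a).card + (inNbr D' b).card) ∧
      (((∀ v, (outNbr D' v).card = 0 ∨ k ≤ 2 * (outNbr D' v).card) ∧
          (∀ v, (inNbr D' v).card = 0 ∨ r ≤ (inNbr D' v).card) ∧
          (∃ a, k ≤ (outNbr D' a).card) ∧
          (outVerts D').card ≤ (inVerts D').card) ∨
        ((∀ v, (outNbr D' v).card = 0 ∨ k ≤ 2 * (outNbr D' v).card) ∧
          (∀ v, (inNbr D' v).card = 0 ∨ k ≤ 2 * (inNbr D' v).card) ∧
          (∃ b, k ≤ (inNbr D' b).card) ∧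
          (∀ a ∈ outVerts D', k - r < (outNbr D a).card))) := by

  classical
  have h2r : 2 * r ≤ k + 1 := by omega
  have hrk2 : r ≤ k := by omega
  -- initial bounds
  have houtD : (outVerts D).card ≤ n := le_trans (Finset.card_le_univ _) hcard.le
  have hinD : (inVerts D).card ≤ n := le_trans (Finset.card_le_univ _) hcard.le
  have hPD : (k - 1) * ((outVerts D).card + (inVerts D).card) < 2 * arcCount D := by
    have h3 : (k - 1) * ((outVerts D).card + (inVerts D).card) ≤ (k - 1) * (2 * n) :=
      Nat.mul_le_mul le_rfl (by omega)
    have h4 : (k - 1) * (2 * n) = 2 * ((k - 1) * n) := by ring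
    linarith
  have hID : (k - r) * (outVerts D).card + (r - 1) * (inVerts D).card < arcCount D := by
    have h3 : (k - r) * (outVerts D).card ≤ (k - r) * n := Nat.mul_le_mul le_rfl houtD
    have h4 : (r - 1) * (inVerts D).card ≤ (r - 1) * n := Nat.mul_le_mul le_rfl hinD
    have h5 : (k - r) * n + (r - 1) * n = (k - 1) * n := by
      rw [← Nat.add_mul]
      congr 1
      omega
    linarith
  -- Stage 1 : minimize the number of arcs subject to both density invariants
  have hex1 : ∃ m, ∃ A : V → V → Bool, ((∀ u v, A u v → D u v) ∧
      (k - 1) * ((outVerts A).card + (inVerts A).card) < 2 * arcCount A ∧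
      (k - r) * (outVerts A).card + (r - 1) * (inVerts A).card < arcCount A) ∧
      arcCount A = m :=
    ⟨arcCount D, D, ⟨fun _ _ h => h, hPD, hID⟩, rfl⟩
  obtain ⟨A₁, ⟨hsub1, hP1, hI1⟩, hfind1⟩ := Nat.find_spec hex1
  have hmin1 : ∀ B : V → V → Bool, (∀ u v, B u v → D u v) →
      (k - 1) * ((outVerts B).card + (inVerts B).card) < 2 * arcCount B →
      (k - r) * (outVerts B).card + (r - 1) * (inVerts B).card < arcCount B →
      arcCount A₁ ≤ arcCount B := by
    intro B h1 h2 h3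
    rw [hfind1]
    exact Nat.find_min' hex1 ⟨B, ⟨h1, h2, h3⟩, rfl⟩
  -- out-degrees are 0 or at least k/2
  have hF1 : ∀ v, (outNbr A₁ v).card = 0 ∨ k ≤ 2 * (outNbr A₁ v).card := by
    intro v
    by_contra hcon
    push_neg at hcon
    obtain ⟨hne, hlt⟩ := hcon
    have hvmem : v ∈ outVerts A₁ := Finset.mem_filter.mpr ⟨Finset.mem_univ v, hne⟩
    have hsp1 : 1 ≤ (outVerts A₁).card := Finset.card_pos.mpr ⟨v, hvmem⟩
    have haB := arcCount_delOut A₁ v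
    have hsP : (outVerts (delOut A₁ v)).card + 1 = (outVerts A₁).card := by
      rw [outVerts_delOut, Finset.card_erase_of_mem hvmem]
      omega
    have hsI : (inVerts (delOut A₁ v)).card ≤ (inVerts A₁).card :=
      Finset.card_le_card (inVerts_delOut_subset A₁ v)
    have hPB : (k - 1) * ((outVerts (delOut A₁ v)).card + (inVerts (delOut A₁ v)).card)
        < 2 * arcCount (delOut A₁ v) :=
      auxP_del (k - 1) (arcCount A₁) (arcCount (delOut A₁ v)) ((outNbr A₁ v).card)
        ((outVerts A₁).card + (inVerts A₁).card)
        ((outVerts (delOut A₁ v)).card + (inVerts (delOut A₁ v)).card)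
        hP1 haB (by omega) (by omega)
    have hIB : (k - r) * (outVerts (delOut A₁ v)).card
        + (r - 1) * (inVerts (delOut A₁ v)).card < arcCount (delOut A₁ v) :=
      auxI_del (k - r) (r - 1) (arcCount A₁) (arcCount (delOut A₁ v)) ((outNbr A₁ v).card)
        ((outVerts A₁).card) ((outVerts (delOut A₁ v)).card)
        ((inVerts A₁).card) ((inVerts (delOut A₁ v)).card)
        hI1 haB (by omega) (by omega) hsI
    have := hmin1 _ (fun u w h => hsub1 u w (delOut_le A₁ v u w h)) hPB hIB
    omega
  -- in-degrees are 0 or at least r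
  have hF3 : ∀ v, (inNbr A₁ v).card = 0 ∨ r ≤ (inNbr A₁ v).card := by
    intro v
    by_contra hcon
    push_neg at hcon
    obtain ⟨hne, hlt⟩ := hcon
    have hvmem : v ∈ inVerts A₁ := Finset.mem_filter.mpr ⟨Finset.mem_univ v, hne⟩
    have hsp1 : 1 ≤ (inVerts A₁).card := Finset.card_pos.mpr ⟨v, hvmem⟩
    have haB := arcCount_delIn A₁ v
    have hsI : (inVerts (delIn A₁ v)).card + 1 = (inVerts A₁).card := by
      rw [inVerts_delIn, Finset.card_erase_of_mem hvmem]
      omega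
    have hsP : (outVerts (delIn A₁ v)).card ≤ (outVerts A₁).card :=
      Finset.card_le_card (outVerts_delIn_subset A₁ v)
    have hPB : (k - 1) * ((outVerts (delIn A₁ v)).card + (inVerts (delIn A₁ v)).card)
        < 2 * arcCount (delIn A₁ v) :=
      auxP_del (k - 1) (arcCount A₁) (arcCount (delIn A₁ v)) ((inNbr A₁ v).card)
        ((outVerts A₁).card + (inVerts A₁).card)
        ((outVerts (delIn A₁ v)).card + (inVerts (delIn A₁ v)).card)
        hP1 haB (by omega) (by omega)
    have hIB : (k - r) * (outVerts (delIn A₁ v)).card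
        + (r - 1) * (inVerts (delIn A₁ v)).card < arcCount (delIn A₁ v) :=
      auxI_del' (k - r) (r - 1) (arcCount A₁) (arcCount (delIn A₁ v)) ((inNbr A₁ v).card)
        ((outVerts A₁).card) ((outVerts (delIn A₁ v)).card)
        ((inVerts A₁).card) ((inVerts (delIn A₁ v)).card)
        hI1 haB (by omega) hsP (by omega)
    have := hmin1 _ (fun u w h => hsub1 u w (delIn_le A₁ v u w h)) hPB hIB
    omega
  -- the pair condition
  have hpair1 : ∀ p ∈ outVerts A₁, ∀ q ∈ inVerts A₁,
      k ≤ (outNbr A₁ p).card + (inNbr A₁ q).card := by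
    intro p hp q hq
    by_contra hcon
    push_neg at hcon
    have hdp : (outNbr A₁ p).card ≠ 0 := (Finset.mem_filter.mp hp).2
    have hdq : (inNbr A₁ q).card ≠ 0 := (Finset.mem_filter.mp hq).2
    have hge := arcCount_delBoth_ge A₁ p q
    have hle := arcCount_delBoth_le A₁ p q
    have hsP : (outVerts (delBoth A₁ p q)).card + 1 ≤ (outVerts A₁).card := by
      have h1 := Finset.card_le_card (outVerts_delBoth_subset A₁ p q)
      rw [Finset.card_erase_of_mem hp] at h1
      have h2 := Finset.card_pos.mpr ⟨p, hp⟩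
      omega
    have hsI : (inVerts (delBoth A₁ p q)).card + 1 ≤ (inVerts A₁).card := by
      have h1 := Finset.card_le_card (inVerts_delBoth_subset A₁ p q)
      rw [Finset.card_erase_of_mem hq] at h1
      have h2 := Finset.card_pos.mpr ⟨q, hq⟩
      omega
    have hPB : (k - 1) * ((outVerts (delBoth A₁ p q)).card + (inVerts (delBoth A₁ p q)).card)
        < 2 * arcCount (delBoth A₁ p q) :=
      auxP_pair (k - 1) (arcCount A₁) (arcCount (delBoth A₁ p q))
        ((outNbr A₁ p).card + (inNbr A₁ q).card)
        ((outVerts A₁).card) ((outVerts (delBoth A₁ p q)).card)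
        ((inVerts A₁).card) ((inVerts (delBoth A₁ p q)).card)
        hP1 hge (by omega) hsP hsI
    have hIB : (k - r) * (outVerts (delBoth A₁ p q)).card
        + (r - 1) * (inVerts (delBoth A₁ p q)).card < arcCount (delBoth A₁ p q) :=
      auxI_pair (k - r) (r - 1) (arcCount A₁) (arcCount (delBoth A₁ p q))
        ((outNbr A₁ p).card + (inNbr A₁ q).card)
        ((outVerts A₁).card) ((outVerts (delBoth A₁ p q)).card)
        ((inVerts A₁).card) ((inVerts (delBoth A₁ p q)).card)
        hI1 hge (by omega) hsP hsI
    have := hmin1 _ (fun u w h => hsub1 u w (delBoth_le A₁ p q u w h)) hPB hIB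
    omega
  by_cases hAB : (outVerts A₁).card ≤ (inVerts A₁).card
  · -- Case A : conclusion (3-I) with A₁
    refine ⟨A₁, hsub1, hP1, hpair1, Or.inl ⟨hF1, hF3, ?_, hAB⟩⟩
    have h1 : (k - 1) * (2 * (outVerts A₁).card)
        ≤ (k - 1) * ((outVerts A₁).card + (inVerts A₁).card) :=
      Nat.mul_le_mul le_rfl (by omega)
    have h2 : (k - 1) * (2 * (outVerts A₁).card) = 2 * ((k - 1) * (outVerts A₁).card) := by
      ring
    obtain ⟨v, hv⟩ := exists_out_ge A₁ (k - 1) (by linarith)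
    exact ⟨v, by omega⟩
  · -- Case B : |⁺| > |⁻| for A₁
    push_neg at hAB
    -- all positive out-degrees of A₁ exceed k - r
    have hF2 : ∀ v, (outNbr A₁ v).card = 0 ∨ k - r < (outNbr A₁ v).card := by
      intro v
      by_contra hcon
      push_neg at hcon
      obtain ⟨hne, hlt⟩ := hcon
      have hvmem : v ∈ outVerts A₁ := Finset.mem_filter.mpr ⟨Finset.mem_univ v, hne⟩
      have hsp1 : 1 ≤ (outVerts A₁).card := Finset.card_pos.mpr ⟨v, hvmem⟩
      have haB := arcCount_delOut A₁ v
      have hsP : (outVerts (delOut A₁ v)).card + 1 = (outVerts A₁).card := by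
        rw [outVerts_delOut, Finset.card_erase_of_mem hvmem]
        omega
      have hsI : (inVerts (delOut A₁ v)).card ≤ (inVerts A₁).card :=
        Finset.card_le_card (inVerts_delOut_subset A₁ v)
      have hIB : (k - r) * (outVerts (delOut A₁ v)).card
          + (r - 1) * (inVerts (delOut A₁ v)).card < arcCount (delOut A₁ v) :=
        auxI_del (k - r) (r - 1) (arcCount A₁) (arcCount (delOut A₁ v)) ((outNbr A₁ v).card)
          ((outVerts A₁).card) ((outVerts (delOut A₁ v)).card)
          ((inVerts A₁).card) ((inVerts (delOut A₁ v)).card)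
          hI1 haB (by omega) (by omega) hsI
      have hPB : (k - 1) * ((outVerts (delOut A₁ v)).card + (inVerts (delOut A₁ v)).card)
          < 2 * arcCount (delOut A₁ v) := by
        have hkCR : k - 1 = (k - r) + (r - 1) := by omega
        rw [hkCR]
        exact auxIP (k - r) (r - 1) ((outVerts (delOut A₁ v)).card)
          ((inVerts (delOut A₁ v)).card) (arcCount (delOut A₁ v)) hIB (by omega) (by omega)
      have := hmin1 _ (fun u w h => hsub1 u w (delOut_le A₁ v u w h)) hPB hIB
      omega
    -- Stage 2 : minimize arcs subject to the first density invariant only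
    have hex2 : ∃ m, ∃ B : V → V → Bool, ((∀ u v, B u v → A₁ u v) ∧
        (k - 1) * ((outVerts B).card + (inVerts B).card) < 2 * arcCount B) ∧
        arcCount B = m :=
      ⟨arcCount A₁, A₁, ⟨fun _ _ h => h, hP1⟩, rfl⟩
    obtain ⟨A₂, ⟨hsub21, hP2⟩, hfind2⟩ := Nat.find_spec hex2
    have hmin2 : ∀ B : V → V → Bool, (∀ u v, B u v → A₁ u v) →
        (k - 1) * ((outVerts B).card + (inVerts B).card) < 2 * arcCount B →
        arcCount A₂ ≤ arcCount B := by
      intro B h1 h2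
      rw [hfind2]
      exact Nat.find_min' hex2 ⟨B, ⟨h1, h2⟩, rfl⟩
    have hsub2D : ∀ u v, A₂ u v → D u v := fun u v h => hsub1 u v (hsub21 u v h)
    have hG1 : ∀ v, (outNbr A₂ v).card = 0 ∨ k ≤ 2 * (outNbr A₂ v).card := by
      intro v
      by_contra hcon
      push_neg at hcon
      obtain ⟨hne, hlt⟩ := hcon
      have hvmem : v ∈ outVerts A₂ := Finset.mem_filter.mpr ⟨Finset.mem_univ v, hne⟩
      have hsp1 : 1 ≤ (outVerts A₂).card := Finset.card_pos.mpr ⟨v, hvmem⟩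
      have haB := arcCount_delOut A₂ v
      have hsP : (outVerts (delOut A₂ v)).card + 1 = (outVerts A₂).card := by
        rw [outVerts_delOut, Finset.card_erase_of_mem hvmem]
        omega
      have hsI : (inVerts (delOut A₂ v)).card ≤ (inVerts A₂).card :=
        Finset.card_le_card (inVerts_delOut_subset A₂ v)
      have hPB : (k - 1) * ((outVerts (delOut A₂ v)).card + (inVerts (delOut A₂ v)).card)
          < 2 * arcCount (delOut A₂ v) :=
        auxP_del (k - 1) (arcCount A₂) (arcCount (delOut A₂ v)) ((outNbr A₂ v).card)
          ((outVerts A₂).card + (inVerts A₂).card)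
          ((outVerts (delOut A₂ v)).card + (inVerts (delOut A₂ v)).card)
          hP2 haB (by omega) (by omega)
      have := hmin2 _ (fun u w h => hsub21 u w (delOut_le A₂ v u w h)) hPB
      omega
    have hG2 : ∀ v, (inNbr A₂ v).card = 0 ∨ k ≤ 2 * (inNbr A₂ v).card := by
      intro v
      by_contra hcon
      push_neg at hcon
      obtain ⟨hne, hlt⟩ := hcon
      have hvmem : v ∈ inVerts A₂ := Finset.mem_filter.mpr ⟨Finset.mem_univ v, hne⟩
      have hsp1 : 1 ≤ (inVerts A₂).card := Finset.card_pos.mpr ⟨v, hvmem⟩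
      have haB := arcCount_delIn A₂ v
      have hsI : (inVerts (delIn A₂ v)).card + 1 = (inVerts A₂).card := by
        rw [inVerts_delIn, Finset.card_erase_of_mem hvmem]
        omega
      have hsP : (outVerts (delIn A₂ v)).card ≤ (outVerts A₂).card :=
        Finset.card_le_card (outVerts_delIn_subset A₂ v)
      have hPB : (k - 1) * ((outVerts (delIn A₂ v)).card + (inVerts (delIn A₂ v)).card)
          < 2 * arcCount (delIn A₂ v) :=
        auxP_del (k - 1) (arcCount A₂) (arcCount (delIn A₂ v)) ((inNbr A₂ v).card)
          ((outVerts A₂).card + (inVerts A₂).card)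
          ((outVerts (delIn A₂ v)).card + (inVerts (delIn A₂ v)).card)
          hP2 haB (by omega) (by omega)
      have := hmin2 _ (fun u w h => hsub21 u w (delIn_le A₂ v u w h)) hPB
      omega
    have hpair2 : ∀ p ∈ outVerts A₂, ∀ q ∈ inVerts A₂,
        k ≤ (outNbr A₂ p).card + (inNbr A₂ q).card := by
      intro p hp q hq
      by_contra hcon
      push_neg at hcon
      have hdp : (outNbr A₂ p).card ≠ 0 := (Finset.mem_filter.mp hp).2
      have hdq : (inNbr A₂ q).card ≠ 0 := (Finset.mem_filter.mp hq).2
      have hge := arcCount_delBoth_ge A₂ p q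
      have hle := arcCount_delBoth_le A₂ p q
      have hsP : (outVerts (delBoth A₂ p q)).card + 1 ≤ (outVerts A₂).card := by
        have h1 := Finset.card_le_card (outVerts_delBoth_subset A₂ p q)
        rw [Finset.card_erase_of_mem hp] at h1
        have h2 := Finset.card_pos.mpr ⟨p, hp⟩
        omega
      have hsI : (inVerts (delBoth A₂ p q)).card + 1 ≤ (inVerts A₂).card := by
        have h1 := Finset.card_le_card (inVerts_delBoth_subset A₂ p q)
        rw [Finset.card_erase_of_mem hq] at h1
        have h2 := Finset.card_pos.mpr ⟨q, hq⟩
        omega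
      have hPB : (k - 1) * ((outVerts (delBoth A₂ p q)).card + (inVerts (delBoth A₂ p q)).card)
          < 2 * arcCount (delBoth A₂ p q) :=
        auxP_pair (k - 1) (arcCount A₂) (arcCount (delBoth A₂ p q))
          ((outNbr A₂ p).card + (inNbr A₂ q).card)
          ((outVerts A₂).card) ((outVerts (delBoth A₂ p q)).card)
          ((inVerts A₂).card) ((inVerts (delBoth A₂ p q)).card)
          hP2 hge (by omega) hsP hsI
      have := hmin2 _ (fun u w h => hsub21 u w (delBoth_le A₂ p q u w h)) hPB
      omega
    have heavy : ∀ v ∈ outVerts A₂, k - r < (outNbr D v).card := by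
      intro v hv
      have hv1 : v ∈ outVerts A₁ := outVerts_mono hsub21 hv
      have h1 : (outNbr A₁ v).card ≠ 0 := (Finset.mem_filter.mp hv1).2
      have h2 : (outNbr A₁ v).card ≤ (outNbr D v).card :=
        Finset.card_le_card (outNbr_mono hsub1 v)
      rcases hF2 v with h | h
      · exact absurd h h1
      · omega
    by_cases hAB2 : (outVerts A₂).card ≤ (inVerts A₂).card
    · -- conclusion (3-I) with A₂
      refine ⟨A₂, hsub2D, hP2, hpair2, Or.inl ⟨hG1, ?_, ?_, hAB2⟩⟩
      · intro v
        rcases hG2 v with h | h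
        · exact Or.inl h
        · exact Or.inr (by omega)
      · have h1 : (k - 1) * (2 * (outVerts A₂).card)
            ≤ (k - 1) * ((outVerts A₂).card + (inVerts A₂).card) :=
          Nat.mul_le_mul le_rfl (by omega)
        have h2 : (k - 1) * (2 * (outVerts A₂).card)
            = 2 * ((k - 1) * (outVerts A₂).card) := by ring
        obtain ⟨v, hv⟩ := exists_out_ge A₂ (k - 1) (by linarith)
        exact ⟨v, by omega⟩
    · -- conclusion (3-II) with A₂
      push_neg at hAB2
      refine ⟨A₂, hsub2D, hP2, hpair2, Or.inr ⟨hG1, hG2, ?_, heavy⟩⟩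
      have h1 : (k - 1) * (2 * (inVerts A₂).card)
          ≤ (k - 1) * ((outVerts A₂).card + (inVerts A₂).card) :=
        Nat.mul_le_mul le_rfl (by omega)
      have h2 : (k - 1) * (2 * (inVerts A₂).card)
          = 2 * ((k - 1) * (inVerts A₂).card) := by ring
      obtain ⟨v, hv⟩ := exists_in_ge A₂ (k - 1) (by linarith)
      exact ⟨v, by omega⟩
end

section
/- Let k be a positive integer, set s = ⌈k/12⌉, let D be a 𝒦_{2,s}-free digraph, and let S be a set of at most k vertices of D. Then for any three pairwise distinct vertices a, b, c of D and any signs ⋆_a, ⋆_b, ⋆_c ∈ {+,−}, we have |N^{⋆_a}(a) ∩ S| + |N^{⋆_b}(b) ∩ S| + |N^{⋆_c}(c) ∩ S| < 5k/4. -/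
open Finset

lemma self_not_nbr {V : Type*} [Fintype V] [DecidableEq V]
    (D : V → V → Bool) (hloop : Loopless D) (s : Bool) (x : V) :
    x ∉ nbr D s x := by
  cases s <;> simp [nbr, outNbr, inNbr, hloop x]

lemma pair_bound {V : Type*} [Fintype V] [DecidableEq V]
    (D : V → V → Bool) (hloop : Loopless D) {s : ℕ}
    (hfree : K2sFree D s) {x y : V} (hxy : x ≠ y) (sx sy : Bool) :
    (nbr D sx x ∩ nbr D sy y).card + 1 ≤ s := by
  by_contra h
  push_neg at h
  have hs : s ≤ (nbr D sx x ∩ nbr D sy y).card := by omega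
  obtain ⟨T, hTsub, hTcard⟩ := Finset.exists_subset_card_eq hs
  apply hfree
  refine ⟨x, y, sx, sy, T, hxy, hTcard, ?_, ?_, hTsub⟩
  · intro hxT
    exact self_not_nbr D hloop sx x (Finset.mem_inter.1 (hTsub hxT)).1
  · intro hyT
    exact self_not_nbr D hloop sy y (Finset.mem_inter.1 (hTsub hyT)).2

/-- In a `𝒦_{2,s}`-free digraph (s = ⌈k/12⌉), for any set `S` of at most `k`
vertices and any three pairwise distinct vertices with signs, the sum of the sizes of the
signed neighbourhoods intersected with `S` is less than `5k/4`. -/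
theorem stmt_14 (k : ℕ) (hk : 0 < k)
    {V : Type*} [Fintype V] [DecidableEq V]
    (D : V → V → Bool) (hloop : Loopless D)
    (hfree : K2sFree D ((k + 11) / 12))
    (S : Finset V) (hS : S.card ≤ k)
    (a b c : V) (hab : a ≠ b) (hac : a ≠ c) (hbc : b ≠ c)
    (sa sb sc : Bool) :
    4 * ((nbr D sa a ∩ S).card + (nbr D sb b ∩ S).card + (nbr D sc c ∩ S).card)
      < 5 * k := by
  set s := (k + 11) / 12 with hs
  have hs1 : 1 ≤ s := Nat.le_div_iff_mul_le (by norm_num) |>.2 (by omega)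
  have hs12 : s * 12 ≤ k + 11 := Nat.div_mul_le_self _ _
  set A := nbr D sa a ∩ S
  set B := nbr D sb b ∩ S
  set C := nbr D sc c ∩ S
  have hAB : (A ∩ B).card + 1 ≤ s := by
    calc (A ∩ B).card + 1 ≤ (nbr D sa a ∩ nbr D sb b).card + 1 := by
          have : A ∩ B ⊆ nbr D sa a ∩ nbr D sb b :=
            Finset.inter_subset_inter Finset.inter_subset_left Finset.inter_subset_left
          exact Nat.add_le_add_right (Finset.card_le_card this) 1
      _ ≤ s := pair_bound D hloop hfree hab sa sb
  have hAC : (A ∩ C).card + 1 ≤ s := by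
    calc (A ∩ C).card + 1 ≤ (nbr D sa a ∩ nbr D sc c).card + 1 := by
          have : A ∩ C ⊆ nbr D sa a ∩ nbr D sc c :=
            Finset.inter_subset_inter Finset.inter_subset_left Finset.inter_subset_left
          exact Nat.add_le_add_right (Finset.card_le_card this) 1
      _ ≤ s := pair_bound D hloop hfree hac sa sc
  have hBC : (B ∩ C).card + 1 ≤ s := by
    calc (B ∩ C).card + 1 ≤ (nbr D sb b ∩ nbr D sc c).card + 1 := by
          have : B ∩ C ⊆ nbr D sb b ∩ nbr D sc c :=
            Finset.inter_subset_inter Finset.inter_subset_left Finset.inter_subset_left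
          exact Nat.add_le_add_right (Finset.card_le_card this) 1
      _ ≤ s := pair_bound D hloop hfree hbc sb sc
  have h1 : A.card + B.card = (A ∪ B).card + (A ∩ B).card :=
    (Finset.card_union_add_card_inter A B).symm
  have h2 : (A ∪ B).card + C.card = (A ∪ B ∪ C).card + ((A ∪ B) ∩ C).card :=
    (Finset.card_union_add_card_inter _ C).symm
  have h3 : ((A ∪ B) ∩ C).card ≤ (A ∩ C).card + (B ∩ C).card := by
    rw [Finset.union_inter_distrib_right]
    exact Finset.card_union_le _ _
  have h4 : (A ∪ B ∪ C).card ≤ S.card := by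
    apply Finset.card_le_card
    intro v hv
    simp only [A, B, C, Finset.mem_union, Finset.mem_inter] at hv
    rcases hv with (h | h) | h <;> exact h.2
  omega
end
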